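/- Let Γ_R be a rational polyhedral convex cone in R^n_{≥0}, let Γ = Γ_R ∩ Z^n_{≥0}, and let Γ' ⊆ Γ. Suppose (a) for all γ ∈ Γ and δ ∈ Γ \ Γ', one has γ + δ ∉ Γ', and (b) for all γ ∈ Γ' and all natural numbers m, one has mγ ∈ Γ'. Then Γ' is a union of sets of the form Φ_R ∩ Z^n_{≥0}, where each Φ_R is a face of Γ_R. -/

import Mathlib

/-- The cone of nonnegative real combinations of the rational vectors `v i`. -/
def coneSpanned {n m : ℕ} (v : Fin m → Fin n → ℚ) : Set (Fin n → ℝ) :=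
  {x | ∃ c : Fin m → ℝ, (∀ i, 0 ≤ c i) ∧ x = ∑ i, c i • fun j => ((v i j : ℝ))}

/-- A rational polyhedral convex cone in `ℝⁿ`. -/
def IsRatPolyCone {n : ℕ} (C : Set (Fin n → ℝ)) : Prop :=
  ∃ (m : ℕ) (v : Fin m → Fin n → ℚ), C = coneSpanned v

/-- A face of a cone: the cone itself, or its intersection with a supporting hyperplane. -/
def IsFaceOf {n : ℕ} (C F : Set (Fin n → ℝ)) : Prop :=
  F = C ∨ ∃ l : (Fin n → ℝ) →ₗ[ℝ] ℝ, (∀ x ∈ C, 0 ≤ l x) ∧ F = {x ∈ C | l x = 0}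

/-- The set of integer points of a subset of `ℝⁿ`. -/
def intPts {n : ℕ} (S : Set (Fin n → ℝ)) : Set (Fin n → ℝ) :=
  {x ∈ S | ∀ i, ∃ z : ℤ, x i = (z : ℝ)}

open Finset

noncomputable section UF

variable {E : Type*} [NormedAddCommGroup E] [NormedSpace ℝ E]

/-- cone generated by a finite family -/
def gc {m : ℕ} (u : Fin m → E) : Set E :=
  {x | ∃ c : Fin m → ℝ, (∀ i, 0 ≤ c i) ∧ x = ∑ i, c i • u i}

/-- cone generated by a subfamily -/
def gcF {m : ℕ} (u : Fin m → E) (S : Finset (Fin m)) : Set E :=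
  {x | ∃ c : Fin m → ℝ, (∀ i, 0 ≤ c i) ∧ (∀ i ∉ S, c i = 0) ∧ x = ∑ i, c i • u i}

variable {m : ℕ} {u : Fin m → E}

lemma gc_zero_mem : (0 : E) ∈ gc u :=
  ⟨0, fun _ => le_refl 0, by simp⟩

lemma gc_add_mem {x y : E} (hx : x ∈ gc u) (hy : y ∈ gc u) : x + y ∈ gc u := by
  obtain ⟨c, hc, rfl⟩ := hx; obtain ⟨d, hd, rfl⟩ := hy
  exact ⟨c + d, fun i => add_nonneg (hc i) (hd i), by simp [add_smul, Finset.sum_add_distrib]⟩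

lemma gc_smul_mem {t : ℝ} (ht : 0 ≤ t) {x : E} (hx : x ∈ gc u) : t • x ∈ gc u := by
  obtain ⟨c, hc, rfl⟩ := hx
  exact ⟨t • c, fun i => mul_nonneg ht (hc i),
    by simp [Finset.smul_sum, smul_smul]⟩

lemma gc_gen_mem (j : Fin m) : u j ∈ gc u := by
  refine ⟨fun i => if i = j then 1 else 0, fun i => by positivity, ?_⟩
  simp [ite_smul]

lemma gc_sum_mem {ι : Type*} (s : Finset ι) (f : ι → E) (hf : ∀ i ∈ s, f i ∈ gc u) :
    ∑ i ∈ s, f i ∈ gc u := by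
  classical
  induction s using Finset.induction with
  | empty => simpa using gc_zero_mem
  | @insert a s hnotmem ih =>
    rw [Finset.sum_insert hnotmem]
    exact gc_add_mem (hf _ (Finset.mem_insert_self _ _))
      (ih fun i hi => hf _ (Finset.mem_insert_of_mem hi))

/-- evaluation of a linear functional nonneg on generators -/
lemma gc_eval_nonneg (l : E →ₗ[ℝ] ℝ) (hl : ∀ i, 0 ≤ l (u i)) {x : E} (hx : x ∈ gc u) :
    0 ≤ l x := by
  obtain ⟨c, hc, rfl⟩ := hx
  rw [map_sum]
  exact Finset.sum_nonneg fun i _ => by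
    rw [map_smul, smul_eq_mul]; exact mul_nonneg (hc i) (hl i)

/-- Carathéodory for cones -/
lemma gc_cara (S : Finset (Fin m)) :
    ∀ x ∈ gcF u S, ∃ T ⊆ S, LinearIndependent ℝ (fun i : T => u i) ∧ x ∈ gcF u T := by
  classical
  induction S using Finset.strongInduction with
  | _ S ih =>
    intro x hx
    by_cases hli : LinearIndependent ℝ (fun i : S => u i)
    · exact ⟨S, Finset.Subset.refl _, hli, hx⟩
    obtain ⟨c, hc, hcS, rfl⟩ := hx
    rw [Fintype.not_linearIndependent_iff] at hli
    obtain ⟨g, hg0, i1, hi1⟩ := hli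
    -- extend to d on Fin m, zero outside S
    set d : Fin m → ℝ := fun i => if h : i ∈ S then g ⟨i, h⟩ else 0 with hd
    have hdS : ∀ i ∉ S, d i = 0 := fun i hi => by simp [hd, hi]
    have hdsum : ∑ i, d i • u i = 0 := by
      rw [← Finset.sum_subset (Finset.subset_univ S)
        (fun i _ hi => by rw [hdS i hi, zero_smul])]
      rw [← Finset.sum_attach S (fun i => d i • u i)]
      simpa [hd] using hg0
    have hdex : ∃ d : Fin m → ℝ, (∀ i ∉ S, d i = 0) ∧ (∑ i, d i • u i = 0) ∧ ∃ i, 0 < d i := by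
      rcases lt_trichotomy (g i1) 0 with h | h | h
      · refine ⟨-d, fun i hi => by simp [hdS i hi], by simpa using hdsum, ⟨i1, ?_⟩⟩
        simp only [Pi.neg_apply, hd, dif_pos i1.2]
        simpa using h
      · exact absurd h hi1
      · exact ⟨d, hdS, hdsum, ⟨i1, by simpa [hd, dif_pos i1.2] using h⟩⟩
    clear hdS hdsum hd hi1 hg0
    obtain ⟨d, hdS, hdsum, i2, hi2⟩ := hdex
    have hi2S : (i2 : Fin m) ∈ S := by
      by_contra h; rw [hdS _ h] at hi2; exact lt_irrefl 0 hi2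
    -- minimize c i / d i over positive d i
    obtain ⟨i0, hi0P, hi0min⟩ := Finset.exists_min_image (S.filter (fun i => 0 < d i))
      (fun i => c i / d i) ⟨i2, Finset.mem_filter.2 ⟨hi2S, hi2⟩⟩
    obtain ⟨hi0S, hi0d⟩ := Finset.mem_filter.1 hi0P
    set t : ℝ := c i0 / d i0 with ht
    have ht0 : 0 ≤ t := div_nonneg (hc i0) hi0d.le
    set c' : Fin m → ℝ := fun i => c i - t * d i with hc'
    have hc'0 : ∀ i, 0 ≤ c' i := by
      intro i
      rcases le_or_gt (d i) 0 with h | h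
      · have : t * d i ≤ 0 := mul_nonpos_of_nonneg_of_nonpos ht0 h
        simp only [hc']; linarith [hc i]
      · have hiS : i ∈ S := by
          by_contra hiS; rw [hdS _ hiS] at h; exact lt_irrefl 0 h
        have hmin := hi0min i (Finset.mem_filter.2 ⟨hiS, h⟩)
        have : t * d i ≤ c i := by
          rw [← le_div_iff₀ h]; exact hmin
        simp only [hc']; linarith
    have hc'i0 : c' i0 = 0 := by
      simp only [hc', ht]; field_simp; ring
    have hc'S : ∀ i ∉ S.erase i0, c' i = 0 := by
      intro i hi
      rw [Finset.mem_erase] at hi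
      push_neg at hi
      by_cases h : i = i0
      · rw [h]; exact hc'i0
      · have hiS := hi h
        simp only [hc', hcS i hiS, hdS i hiS, mul_zero, sub_zero]
    have hsum' : ∑ i, c i • u i = ∑ i, c' i • u i := by
      simp only [hc', sub_smul, mul_smul, Finset.sum_sub_distrib]
      rw [← Finset.smul_sum, hdsum, smul_zero, sub_zero]
    obtain ⟨T, hTsub, hTli, hT⟩ := ih (S.erase i0) (Finset.erase_ssubset hi0S)
      _ ⟨c', hc'0, hc'S, rfl⟩
    exact ⟨T, hTsub.trans (Finset.erase_subset _ _), hTli, by rwa [hsum']⟩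

variable [FiniteDimensional ℝ E]

/-- the linear combination map -/
def combo {ι : Type*} [Fintype ι] (w : ι → E) : (ι → ℝ) →ₗ[ℝ] E where
  toFun c := ∑ i, c i • w i
  map_add' a b := by simp [add_smul, Finset.sum_add_distrib]
  map_smul' r a := by simp [Finset.smul_sum, smul_smul]

lemma gcF_closed (S : Finset (Fin m)) (h : LinearIndependent ℝ (fun i : S => u i)) :
    IsClosed (gcF u S) := by
  classical
  have hker : LinearMap.ker (combo (fun i : S => u i)) = ⊥ := by
    rw [LinearMap.ker_eq_bot']
    intro c hc
    exact funext (Fintype.linearIndependent_iff.1 h c hc)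
  have hce := LinearMap.isClosedEmbedding_of_injective hker
  have hset : IsClosed {c : S → ℝ | ∀ i, 0 ≤ c i} := by
    have : {c : S → ℝ | ∀ i, 0 ≤ c i} = ⋂ i, {c : S → ℝ | 0 ≤ c i} := by
      ext c; simp [Set.mem_iInter]
    rw [this]
    exact isClosed_iInter fun i => isClosed_le continuous_const (continuous_apply i)
  have himg : gcF u S = combo (fun i : S => u i) '' {c : S → ℝ | ∀ i, 0 ≤ c i} := by
    ext x
    constructor
    · rintro ⟨c, hc, hcS, rfl⟩
      refine ⟨fun i => c i, fun i => hc i, ?_⟩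
      show ∑ i : S, c i • u i = _
      rw [Finset.sum_coe_sort S (fun i => c i • u i)]
      exact Finset.sum_subset (Finset.subset_univ S)
        (fun i _ hi => by rw [hcS i hi, zero_smul])
    · rintro ⟨c, hc, rfl⟩
      refine ⟨fun i => if h : i ∈ S then c ⟨i, h⟩ else 0, fun i => ?_,
        fun i hi => by simp [hi], ?_⟩
      · by_cases h : i ∈ S
        · simpa [h] using hc ⟨i, h⟩
        · simp [h]
      show (∑ i : S, c i • u i) = _
      have h1 : ∑ i : Fin m, (if h : i ∈ S then c ⟨i, h⟩ else 0) • u i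
          = ∑ i ∈ S, (if h : i ∈ S then c ⟨i, h⟩ else 0) • u i :=
        (Finset.sum_subset (Finset.subset_univ S) (fun i _ hi => by simp [hi])).symm
      have h2 : ∑ i ∈ S, (if h : i ∈ S then c ⟨i, h⟩ else 0) • u i
          = ∑ i : S, c i • u i := by
        rw [← Finset.sum_coe_sort S]
        exact Finset.sum_congr rfl fun i _ => by simp
      rw [h1, h2]
  rw [himg]
  exact (hce.isClosedMap _ hset)

lemma gc_closed (u : Fin m → E) : IsClosed (gc u) := by
  classical
  have hcov : gc u = ⋃ T ∈ {T : Finset (Fin m) | LinearIndependent ℝ (fun i : T => u i)},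
      gcF u T := by
    ext x
    constructor
    · rintro ⟨c, hc, rfl⟩
      obtain ⟨T, _, hTli, hT⟩ := gc_cara (u := u) Finset.univ _
        ⟨c, hc, fun i hi => absurd (Finset.mem_univ i) hi, rfl⟩
      exact Set.mem_biUnion hTli hT
    · simp only [Set.mem_iUnion]
      rintro ⟨T, hT, c, hc, hcT, rfl⟩
      exact ⟨c, hc, rfl⟩
  rw [hcov]
  exact Set.Finite.isClosed_biUnion (Set.toFinite _) fun T hT => gcF_closed T hT

end UF

section Sep

open RealInnerProductSpace

variable {H : Type*} [NormedAddCommGroup H] [InnerProductSpace ℝ H] [FiniteDimensional ℝ H]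

/-- separation of a point from a finitely generated cone -/
lemma gc_sep {m : ℕ} (w : Fin m → H) (b : H) (hb : b ∉ gc w) :
    ∃ y : H, (∀ x ∈ gc w, 0 ≤ ⟪x, y⟫) ∧ ⟪y, b⟫ < 0 := by
  set K : ConvexCone ℝ H :=
    { carrier := gc w
      smul_mem' := fun t ht x hx => gc_smul_mem ht.le hx
      add_mem' := fun x hx y hy => gc_add_mem hx hy }
  have hne : (K : Set H).Nonempty := ⟨0, gc_zero_mem⟩
  have hcl : IsClosed (K : Set H) := gc_closed w
  let P : ProperCone ℝ H :=
    { carrier := gc w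
      add_mem' := fun hx hy => gc_add_mem hx hy
      zero_mem' := gc_zero_mem
      smul_mem' := fun c x hx => gc_smul_mem (t := (c : ℝ)) c.2 hx
      isClosed' := gc_closed w }
  obtain ⟨y, hy1, hy2⟩ := P.hyperplane_separation' (x₀ := b) hb
  exact ⟨y, hy1, by rw [real_inner_comm]; exact hy2⟩

end Sep

section Main

open RealInnerProductSpace

variable {n : ℕ}

noncomputable def euc : (Fin n → ℝ) ≃L[ℝ] EuclideanSpace ℝ (Fin n) :=
  (EuclideanSpace.equiv (Fin n) ℝ).symm

/-- Existence of a supporting functional vanishing at `γ` and positive at `u j`,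
for `j` outside the minimal face of `γ`. -/
lemma exists_lj {m : ℕ} (u : Fin m → (Fin n → ℝ)) (γ : Fin n → ℝ) (hγ : γ ∈ gc u)
    (j : Fin m) (hj : ¬ ∃ N : ℕ, (N : ℝ) • γ - u j ∈ gc u) :
    ∃ l : (Fin n → ℝ) →ₗ[ℝ] ℝ, (∀ x ∈ gc u, 0 ≤ l x) ∧ l γ = 0 ∧ 0 < l (u j) := by
  classical
  set w : Fin (m + 1) → (Fin n → ℝ) := Fin.cons γ (fun i => -u i) with hw
  -- `u j` is not in the cone generated by `γ` and the `-uᵢ`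
  have hbD : u j ∉ gc w := by
    rintro ⟨c, hc, hrep⟩
    apply hj
    have hrep' : u j = c 0 • γ - ∑ i : Fin m, c i.succ • u i := by
      rw [hrep, Fin.sum_univ_succ]
      simp [hw, sub_eq_add_neg, Finset.sum_neg_distrib]
    have hmem : c 0 • γ - u j ∈ gc u := by
      refine ⟨fun i => c i.succ, fun i => hc i.succ, ?_⟩
      rw [hrep']; abel
    refine ⟨⌈c 0⌉₊, ?_⟩
    have : ((⌈c 0⌉₊ : ℝ)) • γ - u j = (c 0 • γ - u j) + (((⌈c 0⌉₊ : ℝ)) - c 0) • γ := by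
      rw [sub_smul]; abel
    rw [this]
    exact gc_add_mem hmem (gc_smul_mem (sub_nonneg.2 (Nat.le_ceil _)) hγ)
  -- transfer to Euclidean space
  set w' : Fin (m + 1) → EuclideanSpace ℝ (Fin n) := fun i => euc (w i) with hw'
  have hbD' : euc (u j) ∉ gc w' := by
    rintro ⟨c, hc, hrep⟩
    apply hbD
    refine ⟨c, hc, ?_⟩
    have := congrArg euc.symm hrep
    simpa [map_sum, map_smul, hw'] using this
  obtain ⟨y, hy1, hy2⟩ := gc_sep w' (euc (u j)) hbD'
  set l : (Fin n → ℝ) →ₗ[ℝ] ℝ :=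
    { toFun := fun x => -⟪(euc x : EuclideanSpace ℝ (Fin n)), y⟫
      map_add' := fun a b => by simp [map_add, inner_add_left]; ring
      map_smul' := fun r a => by simp [map_smul, inner_smul_left] } with hl
  have hD : ∀ x ∈ gc w, l x ≤ 0 := by
    rintro x ⟨c, hc, rfl⟩
    have : euc (∑ i, c i • w i) ∈ gc w' :=
      ⟨c, hc, by simp [map_sum, map_smul, hw']⟩
    have h0 := hy1 _ this
    simp only [hl, LinearMap.coe_mk, AddHom.coe_mk]
    linarith
  have hgen : ∀ i, 0 ≤ l (u i) := by
    intro i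
    have hmem : -u i ∈ gc w := by
      have := gc_gen_mem (u := w) i.succ
      simpa [hw] using this
    have := hD _ hmem
    rw [map_neg] at this
    linarith
  have hC : ∀ x ∈ gc u, 0 ≤ l x := fun x hx => gc_eval_nonneg l hgen hx
  have hγD : γ ∈ gc w := by
    have := gc_gen_mem (u := w) 0
    simpa [hw] using this
  have hlγ : l γ = 0 := le_antisymm (hD _ hγD) (hC _ hγ)
  refine ⟨l, hC, hlγ, ?_⟩
  have : l (u j) = -⟪y, euc (u j)⟫ := by
    simp only [hl, LinearMap.coe_mk, AddHom.coe_mk, real_inner_comm]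
  rw [this]
  linarith

end Main

section Main2

variable {n : ℕ}

/-- The minimal face of `γ` in a finitely generated cone: it is a face, contains `γ`,
and every element of it is dominated by a natural multiple of `γ`. -/
lemma face_for {m : ℕ} (u : Fin m → (Fin n → ℝ)) (γ : Fin n → ℝ) (hγ : γ ∈ gc u) :
    ∃ F : Set (Fin n → ℝ), IsFaceOf (gc u) F ∧ γ ∈ F ∧ F ⊆ gc u ∧
      ∀ δ ∈ F, ∃ N : ℕ, (N : ℝ) • γ - δ ∈ gc u := by
  classical
  set T : Finset (Fin m) :=
    Finset.univ.filter (fun i => ∃ N : ℕ, (N : ℝ) • γ - u i ∈ gc u) with hT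
  have hmemT : ∀ i, i ∈ T ↔ ∃ N : ℕ, (N : ℝ) • γ - u i ∈ gc u := by
    intro i; simp [hT]
  refine ⟨gcF u T, ?_, ?_, ?_, ?_⟩
  · -- it is a face
    -- the functionals for each j ∉ T
    set lf : Fin m → ((Fin n → ℝ) →ₗ[ℝ] ℝ) := fun j =>
      if h : j ∈ T then 0 else (exists_lj u γ hγ j (fun hex => h ((hmemT j).2 hex))).choose
      with hlf
    have hlf1 : ∀ j ∉ T, (∀ x ∈ gc u, 0 ≤ lf j x) ∧ lf j γ = 0 ∧ 0 < lf j (u j) := by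
      intro j hj
      have := (exists_lj u γ hγ j (fun hex => hj ((hmemT j).2 hex))).choose_spec
      simpa [hlf, dif_neg hj] using this
    set l : (Fin n → ℝ) →ₗ[ℝ] ℝ := ∑ j ∈ Tᶜ, lf j with hl
    have hlapp : ∀ x, l x = ∑ j ∈ Tᶜ, lf j x := by
      intro x; rw [hl, LinearMap.coe_sum, Finset.sum_apply]
    have hlC : ∀ x ∈ gc u, 0 ≤ l x := by
      intro x hx
      rw [hlapp]
      exact Finset.sum_nonneg fun j hj =>
        (hlf1 j (Finset.mem_compl.1 hj)).1 x hx
    -- l vanishes on generators from T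
    have hlT : ∀ i ∈ T, l (u i) = 0 := by
      intro i hiT
      obtain ⟨N, hN⟩ := (hmemT i).1 hiT
      rw [hlapp]
      apply Finset.sum_eq_zero
      intro j hj
      obtain ⟨hj1, hj2, _⟩ := hlf1 j (Finset.mem_compl.1 hj)
      have h1 : 0 ≤ lf j ((N : ℝ) • γ - u i) := hj1 _ hN
      rw [map_sub, map_smul, hj2, smul_eq_mul, mul_zero, zero_sub] at h1
      have h2 : 0 ≤ lf j (u i) := hj1 _ (gc_gen_mem i)
      linarith
    -- l is positive on generators outside T
    have hlnT : ∀ i ∉ T, 0 < l (u i) := by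
      intro i hiT
      rw [hlapp]
      have hterm : ∀ j ∈ Tᶜ, 0 ≤ lf j (u i) := fun j hj =>
        (hlf1 j (Finset.mem_compl.1 hj)).1 _ (gc_gen_mem i)
      have hi : i ∈ Tᶜ := Finset.mem_compl.2 hiT
      calc (0:ℝ) < lf i (u i) := (hlf1 i hiT).2.2
        _ ≤ ∑ j ∈ Tᶜ, lf j (u i) := Finset.single_le_sum hterm hi
    right
    refine ⟨l, hlC, ?_⟩
    ext x
    constructor
    · rintro ⟨c, hc, hcT, rfl⟩
      refine ⟨⟨c, hc, rfl⟩, ?_⟩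
      rw [map_sum]
      apply Finset.sum_eq_zero
      intro i _
      by_cases hiT : i ∈ T
      · rw [map_smul, smul_eq_mul, hlT i hiT, mul_zero]
      · rw [hcT i hiT, zero_smul, map_zero]
    · rintro ⟨⟨c, hc, rfl⟩, hlx⟩
      refine ⟨c, hc, ?_, rfl⟩
      intro i hiT
      rw [map_sum] at hlx
      have hnn : ∀ k ∈ Finset.univ, 0 ≤ l (c k • u k) := by
        intro k _
        rw [map_smul, smul_eq_mul]
        exact mul_nonneg (hc k) (hlC _ (gc_gen_mem k))
      have := (Finset.sum_eq_zero_iff_of_nonneg hnn).1 hlx i (Finset.mem_univ i)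
      rw [map_smul, smul_eq_mul] at this
      rcases mul_eq_zero.1 this with h | h
      · exact h
      · exact absurd h (ne_of_gt (hlnT i hiT))
  · -- γ ∈ gcF u T
    obtain ⟨c, hc, hrep⟩ := hγ
    refine ⟨c, hc, ?_, hrep⟩
    intro i hiT
    by_contra hci
    have hcipos : 0 < c i := lt_of_le_of_ne (hc i) (Ne.symm hci)
    apply hiT
    rw [hmemT]
    refine ⟨⌈1 / c i⌉₊, ?_⟩
    refine ⟨fun k => (⌈1 / c i⌉₊ : ℝ) * c k - (if k = i then 1 else 0), ?_, ?_⟩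
    · intro k
      by_cases hk : k = i
      · subst hk
        simp only [if_true, eq_self_iff_true]
        have h2 : 1 ≤ (⌈1 / c k⌉₊ : ℝ) * c k := (div_le_iff₀ hcipos).mp (Nat.le_ceil _)
        linarith
      · simp only []
        rw [if_neg hk, sub_zero]
        exact mul_nonneg (Nat.cast_nonneg _) (hc k)
    · rw [hrep]
      simp only [sub_smul, mul_smul, ite_smul, one_smul, zero_smul,
        Finset.sum_sub_distrib, ← Finset.smul_sum]
      rw [Finset.sum_ite_eq' Finset.univ i u]
      simp
  · rintro x ⟨c, hc, _, rfl⟩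
    exact ⟨c, hc, rfl⟩
  · -- growth property
    rintro δ ⟨c, hc, hcT, rfl⟩
    set g : Fin m → ℕ := fun i =>
      if h : ∃ N : ℕ, (N : ℝ) • γ - u i ∈ gc u then h.choose else 0 with hg
    have hgspec : ∀ i ∈ T, ((g i : ℝ)) • γ - u i ∈ gc u := by
      intro i hiT
      obtain h := (hmemT i).1 hiT
      simpa [hg, dif_pos h] using h.choose_spec
    refine ⟨⌈∑ i, c i * g i⌉₊, ?_⟩
    have halg : ((⌈∑ i, c i * g i⌉₊ : ℝ)) • γ - ∑ i, c i • u i =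
        (∑ i, c i • (((g i : ℝ)) • γ - u i)) +
          (((⌈∑ i, c i * g i⌉₊ : ℝ)) - ∑ i, c i * g i) • γ := by
      simp only [smul_sub, Finset.sum_sub_distrib, smul_smul, sub_smul,
        ← Finset.sum_smul]
      abel
    rw [halg]
    refine gc_add_mem (gc_sum_mem _ _ ?_) (gc_smul_mem (sub_nonneg.2 (Nat.le_ceil _)) hγ)
    intro i _
    by_cases hci : c i = 0
    · rw [hci, zero_smul]; exact gc_zero_mem
    · have hiT : i ∈ T := by
        by_contra hiT; exact hci (hcT i hiT)
      exact gc_smul_mem (hc i) (hgspec i hiT)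

end Main2

/-- Lemma: if `Γ' ⊆ Γ = C ∩ ℤⁿ_{≥0}` satisfies (a) `γ ∈ Γ`, `δ ∈ Γ \ Γ'` implies
`γ + δ ∉ Γ'`, and (b) `γ ∈ Γ'`, `m ∈ ℕ` implies `mγ ∈ Γ'`, then `Γ'` is a union of
sets of the form `Φ ∩ ℤⁿ_{≥0}` with `Φ` a face of `C`. -/
theorem union_of_faces {n : ℕ} (C : Set (Fin n → ℝ)) (hC : IsRatPolyCone C)
    (hpos : ∀ x ∈ C, ∀ i, 0 ≤ x i)
    (Γ' : Set (Fin n → ℝ)) (hsub : Γ' ⊆ intPts C)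
    (ha : ∀ γ ∈ intPts C, ∀ δ ∈ intPts C, δ ∉ Γ' → γ + δ ∉ Γ')
    (hb : ∀ γ ∈ Γ', ∀ m : ℕ, (m : ℝ) • γ ∈ Γ') :
    ∃ 𝓕 : Set (Set (Fin n → ℝ)), (∀ F ∈ 𝓕, IsFaceOf C F) ∧
      Γ' = ⋃ F ∈ 𝓕, intPts F := by
  classical
  obtain ⟨m, v, rfl⟩ := hC
  set u : Fin m → Fin n → ℝ := fun i => fun j => ((v i j : ℝ)) with hu
  have hgc : coneSpanned v = gc u := rfl
  refine ⟨{F | IsFaceOf (coneSpanned v) F ∧ intPts F ⊆ Γ'}, fun F hF => hF.1, ?_⟩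
  apply Set.Subset.antisymm
  · intro γ hγ
    have hγint := hsub hγ
    have hγC : γ ∈ gc u := by rw [← hgc]; exact hγint.1
    obtain ⟨F, hface, hγF, hFC, hgrow⟩ := face_for u γ hγC
    have hFsub : intPts F ⊆ Γ' := by
      rintro δ ⟨hδF, hδint⟩
      obtain ⟨N, hN⟩ := hgrow δ hδF
      by_contra hδΓ
      have h1 : ((N : ℝ) • γ - δ) ∈ intPts (coneSpanned v) := by
        refine ⟨by rw [hgc]; exact hN, ?_⟩
        intro i
        obtain ⟨z1, hz1⟩ := hγint.2 i
        obtain ⟨z2, hz2⟩ := hδint i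
        refine ⟨N * z1 - z2, ?_⟩
        show (N : ℝ) * γ i - δ i = _
        rw [hz1, hz2]; push_cast; ring
      have h2 : δ ∈ intPts (coneSpanned v) := ⟨by rw [hgc]; exact hFC hδF, hδint⟩
      have h3 := ha _ h1 _ h2 hδΓ
      apply h3
      have : ((N : ℝ) • γ - δ) + δ = (N : ℝ) • γ := by abel
      rw [this]
      exact hb γ hγ N
    refine Set.mem_biUnion ?_ ⟨hγF, hγint.2⟩
    exact ⟨by rw [hgc]; exact hface, hFsub⟩
  · intro x hx
    obtain ⟨F, hF, hxF⟩ := Set.mem_iUnion₂.1 hx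
    exact hF.2 hxF
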